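/- Let A be a unital C*-algebra that is the pull-back of two unital properly infinite C*-algebras A₁ and A₂ along surjective unital *-homomorphisms π₁ : A₁ → B and π₂ : A₂ → B. If B is K₁-injective, then A is properly infinite. -/

import Mathlib

noncomputable section

/-- A projection in a *-ring. -/
def IsProjection {R : Type*} [Mul R] [Star R] (p : R) : Prop :=
  star p = p ∧ p * p = p

/-- Murray–von Neumann equivalence. -/
def MvNEquiv {R : Type*} [Mul R] [Star R] (p q : R) : Prop :=
  ∃ v : R, star v * v = p ∧ v * star v = q

/-- A properly infinite projection: two orthogonal subprojections each equivalent to `p`. -/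
def IsProperlyInfinite {R : Type*} [Ring R] [StarRing R] (p : R) : Prop :=
  ∃ v w : R, star v * v = p ∧ star w * w = p ∧
    p * (v * star v) = v * star v ∧ p * (w * star w) = w * star w ∧
    (v * star v) * (w * star w) = 0

/-- A full element: contained in no proper closed two-sided ideal. -/
def IsFullElem {R : Type*} [Ring R] [TopologicalSpace R] (a : R) : Prop :=
  ∀ I : TwoSidedIdeal R, IsClosed (I : Set R) → a ∈ I → I = ⊤

/-- `[u] = 0` in `K₁`: some stabilization `diag (u,1,…,1)` is connected to `1` in the unitary
group of a matrix algebra. -/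
def K1Trivial {R : Type*} [Ring R] [StarRing R] [TopologicalSpace R] (u : R) : Prop :=
  ∃ n : ℕ, ∃ w : unitary (Matrix (Fin (n + 1)) (Fin (n + 1)) R),
    w.val
      = Matrix.diagonal (fun i => if i = 0 then u else 1) ∧
    Joined (1 : unitary (Matrix (Fin (n + 1)) (Fin (n + 1)) R)) w

/-- `K₁`-injectivity of a unital C*-algebra. -/
def K1Injective (R : Type*) [Ring R] [StarRing R] [TopologicalSpace R] : Prop :=
  ∀ u : unitary R, K1Trivial (u : R) → Joined (1 : unitary R) u

/-- Homotopy of projections: a continuous path of projections from `p` to `q`. -/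
def HomotopicProj {R : Type*} [Mul R] [Star R] [TopologicalSpace R] (p q : R) : Prop :=
  ∃ f : C(unitInterval, R), f 0 = p ∧ f 1 = q ∧ ∀ t, IsProjection (f t)

/-- Stabilized projection `diag (p, 1, …, 1, 0, …, 0)` (with `k+1` ones). -/
def stabProj {R : Type*} [Ring R] (p : R) (k n : ℕ) : Matrix (Fin (n + 1)) (Fin (n + 1)) R :=
  Matrix.diagonal (fun i => if i = 0 then p else if (i : ℕ) ≤ k + 1 then 1 else 0)

/-- `[p] = [q]` in `K₀` of a unital ring, via stabilized Murray–von Neumann equivalence. -/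
def K0Eq {R : Type*} [Ring R] [StarRing R] (p q : R) : Prop :=
  ∃ k n : ℕ, MvNEquiv (stabProj p k n) (stabProj q k n)


namespace Stmt7Proof

section Part1




variable {B : Type*} [Ring B] [StarRing B]

/-- Core construction: given two "rows" of isometries with orthogonal ranges and extra
room (c resp. d), there is a unitary u₀ with u₀ * τᵢ = σᵢ. -/
lemma exists_intertwiner (s1 s2 c t1 t2 d : B)
    (h11 : star s1 * s1 = 1) (h22 : star s2 * s2 = 1) (hcc : star c * c = 1)
    (h12 : star s1 * s2 = 0) (h21 : star s2 * s1 = 0)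
    (hc1 : star c * s1 = 0) (hc2 : star c * s2 = 0)
    (h1c : star s1 * c = 0) (h2c : star s2 * c = 0)
    (k11 : star t1 * t1 = 1) (k22 : star t2 * t2 = 1) (kdd : star d * d = 1)
    (k12 : star t1 * t2 = 0) (k21 : star t2 * t1 = 0)
    (kd1 : star d * t1 = 0) (kd2 : star d * t2 = 0)
    (k1d : star t1 * d = 0) (k2d : star t2 * d = 0) :
    ∃ u0 : B, star u0 * u0 = 1 ∧ u0 * star u0 = 1 ∧ u0 * t1 = s1 ∧ u0 * t2 = s2 := by
  -- parametric forms
  have h11' : ∀ y, star s1 * (s1 * y) = y := fun y => by rw [← mul_assoc, h11, one_mul]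
  have h22' : ∀ y, star s2 * (s2 * y) = y := fun y => by rw [← mul_assoc, h22, one_mul]
  have hcc' : ∀ y, star c * (c * y) = y := fun y => by rw [← mul_assoc, hcc, one_mul]
  have h12' : ∀ y, star s1 * (s2 * y) = 0 := fun y => by rw [← mul_assoc, h12, zero_mul]
  have h21' : ∀ y, star s2 * (s1 * y) = 0 := fun y => by rw [← mul_assoc, h21, zero_mul]
  have hc1' : ∀ y, star c * (s1 * y) = 0 := fun y => by rw [← mul_assoc, hc1, zero_mul]
  have hc2' : ∀ y, star c * (s2 * y) = 0 := fun y => by rw [← mul_assoc, hc2, zero_mul]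
  have h1c' : ∀ y, star s1 * (c * y) = 0 := fun y => by rw [← mul_assoc, h1c, zero_mul]
  have h2c' : ∀ y, star s2 * (c * y) = 0 := fun y => by rw [← mul_assoc, h2c, zero_mul]
  have k11' : ∀ y, star t1 * (t1 * y) = y := fun y => by rw [← mul_assoc, k11, one_mul]
  have k22' : ∀ y, star t2 * (t2 * y) = y := fun y => by rw [← mul_assoc, k22, one_mul]
  have kdd' : ∀ y, star d * (d * y) = y := fun y => by rw [← mul_assoc, kdd, one_mul]
  have k12' : ∀ y, star t1 * (t2 * y) = 0 := fun y => by rw [← mul_assoc, k12, zero_mul]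
  have k21' : ∀ y, star t2 * (t1 * y) = 0 := fun y => by rw [← mul_assoc, k21, zero_mul]
  have kd1' : ∀ y, star d * (t1 * y) = 0 := fun y => by rw [← mul_assoc, kd1, zero_mul]
  have kd2' : ∀ y, star d * (t2 * y) = 0 := fun y => by rw [← mul_assoc, kd2, zero_mul]
  have k1d' : ∀ y, star t1 * (d * y) = 0 := fun y => by rw [← mul_assoc, k1d, zero_mul]
  have k2d' : ∀ y, star t2 * (d * y) = 0 := fun y => by rw [← mul_assoc, k2d, zero_mul]
  refine ⟨s1 * star t1 + s2 * star t2 +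
    (c * ((1 - t1 * star t1 - t2 * star t2 - d * star d)
        + (d * star c + t1 * star s1 + t2 * star s2) * star d)
     + (1 - s1 * star s1 - s2 * star s2 - c * star c) * star d), ?_, ?_, ?_, ?_⟩
  · simp only [star_add, star_sub, star_mul, star_one, star_star, mul_add, add_mul, mul_sub,
      sub_mul, mul_one, one_mul, mul_assoc,
      h11, h22, hcc, h12, h21, hc1, hc2, h1c, h2c, k11, k22, kdd, k12, k21, kd1, kd2, k1d, k2d,
      h11', h22', hcc', h12', h21', hc1', hc2', h1c', h2c',
      k11', k22', kdd', k12', k21', kd1', kd2', k1d', k2d',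
      mul_zero, zero_mul, add_zero, zero_add, sub_zero, zero_sub, neg_zero]
    abel
  · simp only [star_add, star_sub, star_mul, star_one, star_star, mul_add, add_mul, mul_sub,
      sub_mul, mul_one, one_mul, mul_assoc,
      h11, h22, hcc, h12, h21, hc1, hc2, h1c, h2c, k11, k22, kdd, k12, k21, kd1, kd2, k1d, k2d,
      h11', h22', hcc', h12', h21', hc1', hc2', h1c', h2c',
      k11', k22', kdd', k12', k21', kd1', kd2', k1d', k2d',
      mul_zero, zero_mul, add_zero, zero_add, sub_zero, zero_sub, neg_zero]
    abel
  · simp only [star_add, star_sub, star_mul, star_one, star_star, mul_add, add_mul, mul_sub,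
      sub_mul, mul_one, one_mul, mul_assoc,
      h11, h22, hcc, h12, h21, hc1, hc2, h1c, h2c, k11, k22, kdd, k12, k21, kd1, kd2, k1d, k2d,
      h11', h22', hcc', h12', h21', hc1', hc2', h1c', h2c',
      k11', k22', kdd', k12', k21', kd1', kd2', k1d', k2d',
      mul_zero, zero_mul, add_zero, zero_add, sub_zero, zero_sub, neg_zero]
    abel
  · simp only [star_add, star_sub, star_mul, star_one, star_star, mul_add, add_mul, mul_sub,
      sub_mul, mul_one, one_mul, mul_assoc,
      h11, h22, hcc, h12, h21, hc1, hc2, h1c, h2c, k11, k22, kdd, k12, k21, kd1, kd2, k1d, k2d,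
      h11', h22', hcc', h12', h21', hc1', hc2', h1c', h2c',
      k11', k22', kdd', k12', k21', kd1', kd2', k1d', k2d',
      mul_zero, zero_mul, add_zero, zero_add, sub_zero, zero_sub, neg_zero]
    abel

end Part1

section Part2




variable {B : Type*} [Ring B] [StarRing B]

lemma theta_props (x d t1 t2 : B) (hx1 : star x * x = 1) (hx2 : x * star x = 1)
    (hdd : star d * d = 1) (hd1 : star d * t1 = 0) (hd2 : star d * t2 = 0) :
    star (d * star x * star d + 1 - d * star d) * (d * star x * star d + 1 - d * star d) = 1 ∧
    (d * star x * star d + 1 - d * star d) * star (d * star x * star d + 1 - d * star d) = 1 ∧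
    (d * star x * star d + 1 - d * star d) * t1 = t1 ∧
    (d * star x * star d + 1 - d * star d) * t2 = t2 := by
  have hdd' : ∀ y, star d * (d * y) = y := fun y => by rw [← mul_assoc, hdd, one_mul]
  have hx1' : ∀ y, star x * (x * y) = y := fun y => by rw [← mul_assoc, hx1, one_mul]
  have hx2' : ∀ y, x * (star x * y) = y := fun y => by rw [← mul_assoc, hx2, one_mul]
  have hd1' : ∀ y, star d * (t1 * y) = 0 := fun y => by rw [← mul_assoc, hd1, zero_mul]
  have hd2' : ∀ y, star d * (t2 * y) = 0 := fun y => by rw [← mul_assoc, hd2, zero_mul]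
  refine ⟨?_, ?_, ?_, ?_⟩ <;>
  · simp only [star_add, star_sub, star_mul, star_one, star_star, mul_add, add_mul, mul_sub,
      sub_mul, mul_one, one_mul, mul_assoc, hdd, hx1, hx2, hd1, hd2,
      hdd', hx1', hx2', hd1', hd2',
      mul_zero, zero_mul, add_zero, zero_add, sub_zero, zero_sub, neg_zero]
    try abel

end Part2

section Part3




open Complex

variable {B : Type*} [CStarAlgebra B]

namespace K1ThetaAux

variable (B)
abbrev M := Matrix (Fin 2) (Fin 2) B
variable {B}

def Dm (a b : B) : M B := !![a, 0; 0, b]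

lemma Dm_mul (a b a' b' : B) : Dm a b * Dm a' b' = Dm (a * a') (b * b') := by
  simp [Dm, Matrix.mul_fin_two]

lemma Dm_one : Dm (1 : B) 1 = 1 := by simp [Dm, Matrix.one_fin_two]

lemma star_Dm (a b : B) : star (Dm a b) = Dm (star a) (star b) := by
  ext i j
  fin_cases i <;> fin_cases j <;> simp [Dm, Matrix.star_apply]

def E : M B := !![0, -1; 1, 0]

lemma star_E : star (E : M B) = -E := by
  ext i j
  fin_cases i <;> fin_cases j <;> simp [E, Matrix.star_apply]

lemma E_mul_E : (E : M B) * E = -1 := by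
  simp [E, Matrix.mul_fin_two, Matrix.one_fin_two]

lemma E_unitary : (E : M B) ∈ unitary (M B) := by
  rw [Unitary.mem_iff, star_E]
  constructor <;> simp [E_mul_E, neg_mul, mul_neg]

lemma E_conj (a b : B) : (E : M B) * Dm a b * star E = Dm b a := by
  rw [star_E]
  simp [E, Dm, Matrix.mul_fin_two]

lemma Dm_unitary {a b : B} (ha : a ∈ unitary B) (hb : b ∈ unitary B) :
    Dm a b ∈ unitary (M B) := by
  rw [Unitary.mem_iff, star_Dm, Dm_mul, Dm_mul,
    Unitary.star_mul_self_of_mem ha, Unitary.star_mul_self_of_mem hb,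
    Unitary.mul_star_self_of_mem ha, Unitary.mul_star_self_of_mem hb, Dm_one]
  exact ⟨rfl, rfl⟩

end K1ThetaAux

namespace K1ThetaAux

variable {B : Type*} [CStarAlgebra B]

lemma fin2_ext {a b c d e f g h : B} (h1 : a = e) (h2 : b = f) (h3 : c = g) (h4 : d = h) :
    !![a, b; c, d] = !![e, f; g, h] := by rw [h1, h2, h3, h4]

lemma star_fin_two (a b c d : B) :
    star (!![a, b; c, d]) = !![star a, star c; star b, star d] := by
  rw [Matrix.star_eq_conjTranspose, Matrix.eta_fin_two (Matrix.conjTranspose !![a, b; c, d])]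
  simp [Matrix.conjTranspose_apply]

def J1 (d : B) : M B := !![1 - d * star d, d; star d, 0]
def J2 (d : B) : M B := !![d * (1 - d * star d) + (1 - d * star d) * star d, d * d;
                           star d * star d, 0]
def Wm (d : B) : M B := !![d, 1 - d * star d; 0, star d]

section Jmats
variable {d : B}

lemma star_J1 : star (J1 d) = J1 d := by
  rw [J1, star_fin_two]
  exact fin2_ext (by simp [star_sub, star_mul]) (by simp) (by simp) (by simp)

lemma star_J2 : star (J2 d) = J2 d := by
  rw [J2, star_fin_two]
  refine fin2_ext ?_ (by simp [star_mul]) (by simp [star_mul]) (by simp)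
  simp only [star_add, star_sub, star_mul, star_one, star_star]
  abel

lemma J1_sq (hdd : star d * d = 1) : J1 d * J1 d = 1 := by
  have hdd' : ∀ y : B, star d * (d * y) = y := fun y => by rw [← mul_assoc, hdd, one_mul]
  rw [J1, Matrix.mul_fin_two, Matrix.one_fin_two]
  refine fin2_ext ?_ ?_ ?_ ?_ <;>
  · simp only [mul_add, add_mul, mul_sub, sub_mul, mul_one, one_mul, mul_assoc, hdd, hdd',
      mul_zero, zero_mul, add_zero, zero_add, sub_zero, zero_sub, neg_zero]
    try abel

lemma J2_sq (hdd : star d * d = 1) : J2 d * J2 d = 1 := by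
  have hdd' : ∀ y : B, star d * (d * y) = y := fun y => by rw [← mul_assoc, hdd, one_mul]
  rw [J2, Matrix.mul_fin_two, Matrix.one_fin_two]
  refine fin2_ext ?_ ?_ ?_ ?_ <;>
  · simp only [mul_add, add_mul, mul_sub, sub_mul, mul_one, one_mul, mul_assoc, hdd, hdd',
      mul_zero, zero_mul, add_zero, zero_add, sub_zero, zero_sub, neg_zero]
    try abel

lemma J2_mul_J1 (hdd : star d * d = 1) : J2 d * J1 d = Wm d := by
  have hdd' : ∀ y : B, star d * (d * y) = y := fun y => by rw [← mul_assoc, hdd, one_mul]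
  rw [J1, J2, Wm, Matrix.mul_fin_two]
  refine fin2_ext ?_ ?_ ?_ ?_ <;>
  · simp only [mul_add, add_mul, mul_sub, sub_mul, mul_one, one_mul, mul_assoc, hdd, hdd',
      mul_zero, zero_mul, add_zero, zero_add, sub_zero, zero_sub, neg_zero]
    try abel

lemma Wm_conj (hdd : star d * d = 1) (a : B) :
    Wm d * Dm a 1 * star (Wm d) = Dm (d * a * star d + 1 - d * star d) 1 := by
  have hdd' : ∀ y : B, star d * (d * y) = y := fun y => by rw [← mul_assoc, hdd, one_mul]
  rw [Wm, Dm, Dm, star_fin_two, Matrix.mul_fin_two, Matrix.mul_fin_two]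
  refine fin2_ext ?_ ?_ ?_ ?_ <;>
  · simp only [star_sub, star_mul, star_one, star_star, star_zero]
    simp only [mul_add, add_mul, mul_sub, sub_mul, mul_one, one_mul, mul_assoc, hdd, hdd',
      mul_zero, zero_mul, add_zero, zero_add, sub_zero, zero_sub, neg_zero]
    try abel

end Jmats

/-- unitarity of `1 + (z-1)•Q` for a projection `Q` and `z` on the unit circle -/
lemma proj_unitary {Q : M B} (hQs : star Q = Q) (hQ2 : Q * Q = Q) {z : ℂ}
    (hz : ‖z‖ = 1) : (1 + (z - 1) • Q) ∈ unitary (M B) := by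
  have hst : star (1 + (z - 1) • Q) = 1 + (star (z - 1)) • Q := by
    rw [star_add, star_one, star_smul, hQs]
  have key : ∀ a b : ℂ, a + b + b * a = 0 → (1 + a • Q) * (1 + b • Q) = 1 := by
    intro a b hab
    have h1 : (a • Q) * (b • Q) = (b * a) • Q := by
      rw [smul_mul_assoc, mul_smul_comm, smul_smul, mul_comm a b, hQ2]
    have h3 : a • Q + (b • Q + (b * a) • Q) = (a + b + b * a) • Q := by
      rw [add_smul, add_smul, add_assoc]
    have expand : (1 + a • Q) * (1 + b • Q) = 1 + (a • Q + (b • Q + (b * a) • Q)) := by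
      rw [mul_add, add_mul, add_mul, one_mul, one_mul, mul_one, h1]
      abel
    rw [expand, h3, hab, zero_smul, add_zero]
  have habs : star z * z = 1 := by
    rw [Complex.star_def, mul_comm, Complex.mul_conj, Complex.normSq_eq_norm_sq, hz]
    norm_num
  rw [Unitary.mem_iff, hst]
  constructor
  · refine key _ _ ?_
    simp only [star_sub, star_one]
    linear_combination habs
  · refine key _ _ ?_
    simp only [star_sub, star_one]
    linear_combination habs

def rot (t : ℝ) : M B :=
  (Real.cos (Real.pi * t / 2) : ℂ) • 1 + (Real.sin (Real.pi * t / 2) : ℂ) • E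
def strot (t : ℝ) : M B :=
  (Real.cos (Real.pi * t / 2) : ℂ) • 1 + (-(Real.sin (Real.pi * t / 2) : ℂ)) • E

lemma star_rot (t : ℝ) : star (rot t : M B) = strot t := by
  rw [rot, strot, star_add, star_smul, star_smul, star_one, star_E]
  rw [Complex.star_def, Complex.conj_ofReal, Complex.conj_ofReal, smul_neg, neg_smul]

lemma rot_mul (c s c' s' : ℂ) :
    (c • (1 : M B) + s • E) * (c' • 1 + s' • E)
      = (c * c' - s * s') • 1 + (c * s' + s * c') • E := by
  have hE : (E : M B) * E = -1 := E_mul_E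
  rw [mul_add, add_mul, add_mul, smul_mul_assoc, smul_mul_assoc, smul_mul_assoc, smul_mul_assoc,
    mul_smul_comm, mul_smul_comm, mul_smul_comm, mul_smul_comm, one_mul, mul_one, hE,
    smul_smul, smul_smul, smul_smul, smul_smul, smul_neg, sub_smul, add_smul]
  rw [one_mul]
  abel

lemma rot_unitary (t : ℝ) : (rot t : M B) ∈ unitary (M B) := by
  have h : Real.cos (Real.pi * t / 2) ^ 2 + Real.sin (Real.pi * t / 2) ^ 2 = 1 :=
    Real.cos_sq_add_sin_sq _
  have hc : ((Real.cos (Real.pi * t / 2) : ℂ) * (Real.cos (Real.pi * t / 2) : ℂ)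
      + (Real.sin (Real.pi * t / 2) : ℂ) * (Real.sin (Real.pi * t / 2) : ℂ)) = 1 := by
    norm_cast
    nlinarith [h]
  rw [Unitary.mem_iff, star_rot, rot, strot, rot_mul, rot_mul]
  constructor
  · rw [show ((Real.cos (Real.pi * t / 2) : ℂ) * (Real.cos (Real.pi * t / 2) : ℂ)
      - (-(Real.sin (Real.pi * t / 2) : ℂ)) * (Real.sin (Real.pi * t / 2) : ℂ)) = 1 by
        linear_combination hc]
    rw [show ((Real.cos (Real.pi * t / 2) : ℂ) * (Real.sin (Real.pi * t / 2) : ℂ)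
      + (-(Real.sin (Real.pi * t / 2) : ℂ)) * (Real.cos (Real.pi * t / 2) : ℂ)) = 0 by ring]
    rw [one_smul, zero_smul, add_zero]
  · rw [show ((Real.cos (Real.pi * t / 2) : ℂ) * (Real.cos (Real.pi * t / 2) : ℂ)
      - (Real.sin (Real.pi * t / 2) : ℂ) * (-(Real.sin (Real.pi * t / 2) : ℂ))) = 1 by
        linear_combination hc]
    rw [show ((Real.cos (Real.pi * t / 2) : ℂ) * (-(Real.sin (Real.pi * t / 2) : ℂ))
      + (Real.sin (Real.pi * t / 2) : ℂ) * (Real.cos (Real.pi * t / 2) : ℂ)) = 0 by ring]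
    rw [one_smul, zero_smul, add_zero]

lemma rot_zero : (rot 0 : M B) = 1 := by
  rw [rot]; simp

lemma strot_zero : (strot 0 : M B) = 1 := by
  rw [strot]; simp

lemma rot_one : (rot 1 : M B) = E := by
  rw [rot]
  norm_num [Real.cos_pi_div_two, Real.sin_pi_div_two]

lemma strot_one : (strot 1 : M B) = -E := by
  rw [strot]
  norm_num [Real.cos_pi_div_two, Real.sin_pi_div_two]

lemma continuous_rot : Continuous (rot : ℝ → M B) := by
  refine Continuous.add (Continuous.fun_smul ?_ continuous_const)
    (Continuous.fun_smul ?_ continuous_const) <;> fun_prop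

lemma continuous_strot : Continuous (strot : ℝ → M B) := by
  refine Continuous.add (Continuous.fun_smul ?_ continuous_const)
    (Continuous.fun_smul ?_ continuous_const) <;> fun_prop

def gam (Q : M B) (z : ℂ) : M B := 1 + (z - 1) • Q

lemma gam_one (Q : M B) : gam Q 1 = 1 := by
  rw [gam, sub_self, zero_smul, add_zero]

def zf (t : ℝ) : ℂ := Complex.exp ((Real.pi * t : ℝ) * Complex.I)

lemma abs_zf (t : ℝ) : ‖zf t‖ = 1 := Complex.norm_exp_ofReal_mul_I _

lemma zf_zero : zf 0 = 1 := by
  rw [zf]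
  norm_num [Complex.exp_zero]

lemma zf_one : zf 1 = -1 := by
  rw [zf]
  norm_num [Complex.exp_pi_mul_I]

lemma continuous_zf : Continuous zf := by
  unfold zf
  fun_prop

lemma continuous_zfc : Continuous (fun t => (starRingEnd ℂ) (zf t)) :=
  Complex.continuous_conj.comp continuous_zf

lemma abs_zfc (t : ℝ) : ‖(starRingEnd ℂ) (zf t)‖ = 1 := by
  rw [Complex.norm_conj]; exact abs_zf t

lemma zfc_zero : (starRingEnd ℂ) (zf 0) = 1 := by rw [zf_zero, map_one]

lemma zfc_one : (starRingEnd ℂ) (zf 1) = -1 := by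
  rw [zf_one]
  simp

lemma star_gam {Q : M B} (hQs : star Q = Q) (z : ℂ) :
    star (gam Q z) = gam Q ((starRingEnd ℂ) z) := by
  rw [gam, gam, star_add, star_one, star_smul, hQs, Complex.star_def, map_sub, map_one]

section QJ
variable {d : B}

def Q1 (d : B) : M B := (2⁻¹ : ℂ) • (1 - J1 d)
def Q2 (d : B) : M B := (2⁻¹ : ℂ) • (1 - J2 d)

lemma conj_half : (starRingEnd ℂ) (2⁻¹ : ℂ) = 2⁻¹ := by
  rw [show (2⁻¹ : ℂ) = ((2⁻¹ : ℝ) : ℂ) by norm_num, Complex.conj_ofReal]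

lemma star_of_symmetry {J : M B} (hJs : star J = J) :
    star ((2⁻¹ : ℂ) • (1 - J)) = (2⁻¹ : ℂ) • (1 - J) := by
  rw [star_smul, star_sub, star_one, hJs, Complex.star_def, conj_half]

lemma idem_of_symmetry {J : M B} (hJ2 : J * J = 1) :
    ((2⁻¹ : ℂ) • (1 - J)) * ((2⁻¹ : ℂ) • (1 - J)) = (2⁻¹ : ℂ) • (1 - J) := by
  have hsq : (1 - J) * (1 - J) = (1 - J) + (1 - J) := by
    rw [mul_sub, sub_mul, sub_mul, one_mul, one_mul, mul_one, hJ2]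
    abel
  rw [smul_mul_assoc, mul_smul_comm, smul_smul, hsq, smul_add, ← add_smul,
    show ((2:ℂ)⁻¹ * 2⁻¹ + 2⁻¹ * 2⁻¹) = 2⁻¹ by norm_num]

lemma Q1_star : star (Q1 d) = Q1 d := star_of_symmetry star_J1
lemma Q2_star : star (Q2 d) = Q2 d := star_of_symmetry star_J2
lemma Q1_idem (hdd : star d * d = 1) : Q1 d * Q1 d = Q1 d := idem_of_symmetry (J1_sq hdd)
lemma Q2_idem (hdd : star d * d = 1) : Q2 d * Q2 d = Q2 d := idem_of_symmetry (J2_sq hdd)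

lemma gam_neg_one {J : M B} : gam ((2⁻¹ : ℂ) • (1 - J)) (-1) = J := by
  rw [gam, smul_smul, show ((-1 : ℂ) - 1) * 2⁻¹ = -1 by norm_num, neg_smul, one_smul]
  abel

def W2 (d : B) (t : ℝ) : M B := gam (Q2 d) (zf t) * gam (Q1 d) (zf t)
def W2' (d : B) (t : ℝ) : M B :=
  gam (Q1 d) ((starRingEnd ℂ) (zf t)) * gam (Q2 d) ((starRingEnd ℂ) (zf t))

lemma star_W2 (t : ℝ) : star (W2 d t) = W2' d t := by
  rw [W2, W2', star_mul, star_gam Q1_star, star_gam Q2_star]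

lemma W2_zero : W2 d 0 = 1 := by
  rw [W2, zf_zero, gam_one, gam_one, one_mul]

lemma W2'_zero : W2' d 0 = 1 := by
  rw [W2', zfc_zero, gam_one, gam_one, one_mul]

lemma W2_one (hdd : star d * d = 1) : W2 d 1 = Wm d := by
  rw [W2, zf_one, Q1, Q2, gam_neg_one, gam_neg_one, J2_mul_J1 hdd]

lemma W2_mem (hdd : star d * d = 1) (t : ℝ) : W2 d t ∈ unitary (M B) := by
  exact mul_mem (proj_unitary Q2_star (Q2_idem hdd) (abs_zf t))
    (proj_unitary Q1_star (Q1_idem hdd) (abs_zf t))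

lemma W2'_mem (hdd : star d * d = 1) (t : ℝ) : W2' d t ∈ unitary (M B) := by
  rw [← star_W2]
  exact Unitary.star_mem (W2_mem hdd t)

lemma continuous_W2 : Continuous (W2 d) := by
  have hg : ∀ Q : M B, Continuous (fun t => gam Q (zf t)) := fun Q =>
    continuous_const.add ((continuous_zf.sub continuous_const).smul continuous_const)
  exact (hg _).mul (hg _)

lemma continuous_W2' : Continuous (W2' d) := by
  have hg : ∀ Q : M B, Continuous (fun t => gam Q ((starRingEnd ℂ) (zf t))) := fun Q =>
    continuous_const.add ((continuous_zfc.sub continuous_const).smul continuous_const)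
  exact (hg _).mul (hg _)

end QJ

lemma joined_of_fun {f : ℝ → M B} (hf : Continuous f) (hmem : ∀ t, f t ∈ unitary (M B))
    {a b : unitary (M B)} (h0 : f 0 = a.1) (h1 : f 1 = b.1) : Joined a b := by
  exact ⟨{ toFun := fun t => ⟨f t, hmem t⟩
           continuous_toFun := (hf.comp continuous_subtype_val).subtype_mk _
           source' := Subtype.ext (by simpa using h0)
           target' := Subtype.ext (by simpa using h1) }⟩


lemma diag_eq_Dm (u : B) :
    Matrix.diagonal (fun i : Fin 2 => if i = 0 then u else 1) = Dm u 1 := by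
  ext i j
  fin_cases i <;> fin_cases j <;>
    simp [Dm, Matrix.diagonal_apply]

end K1ThetaAux

open K1ThetaAux in
/-- the unitary `x · θ_d(x*)` has trivial `K₁`-class, witnessed explicitly at the 2×2 level. -/
lemma k1trivial_theta {B : Type*} [CStarAlgebra B] (x d : B)
    (hx1 : star x * x = 1) (hx2 : x * star x = 1) (hdd : star d * d = 1)
    (hθ1 : star (d * star x * star d + 1 - d * star d) * (d * star x * star d + 1 - d * star d)
      = 1)
    (hθ2 : (d * star x * star d + 1 - d * star d) * star (d * star x * star d + 1 - d * star d)
      = 1) :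
    K1Trivial (x * (d * star x * star d + 1 - d * star d)) := by
  set θ : B := d * star x * star d + 1 - d * star d with hθdef
  have hxu : x ∈ unitary B := Unitary.mem_iff.mpr ⟨hx1, hx2⟩
  have hθu : θ ∈ unitary B := Unitary.mem_iff.mpr ⟨hθ1, hθ2⟩
  have hxs : star x ∈ unitary B := Unitary.star_mem hxu
  set U1 : unitary (M B) := ⟨Dm x (star x), Dm_unitary hxu hxs⟩ with hU1
  set U2 : unitary (M B) := ⟨Dm x θ, Dm_unitary hxu hθu⟩ with hU2
  set U3 : unitary (M B) := ⟨Dm (x * θ) 1, Dm_unitary (mul_mem hxu hθu) (one_mem _)⟩ with hU3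
  have j1 : Joined (1 : unitary (M B)) U1 := by
    refine joined_of_fun (f := fun t => Dm x 1 * rot t * Dm (star x) 1 * strot t) ?_ ?_ ?_ ?_
    · exact ((continuous_const.fun_mul continuous_rot).fun_mul continuous_const).fun_mul continuous_strot
    · intro t
      refine mul_mem (mul_mem (mul_mem ?_ (rot_unitary t)) ?_) ?_
      · exact Dm_unitary hxu (one_mem _)
      · exact Dm_unitary hxs (one_mem _)
      · rw [← star_rot]; exact Unitary.star_mem (rot_unitary t)
    · beta_reduce
      rw [rot_zero, strot_zero, mul_one, mul_one, Dm_mul, hx2, mul_one, Dm_one]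
      rfl
    · beta_reduce
      rw [rot_one, strot_one, show (-E : M B) = star E by rw [star_E],
        mul_assoc (Dm x 1), mul_assoc (Dm x 1), E_conj, Dm_mul,
        mul_one, one_mul]
  have j2 : Joined U1 U2 := by
    refine joined_of_fun
      (f := fun t => Dm x 1 * (E * (W2 d t * Dm (star x) 1 * W2' d t) * star E)) ?_ ?_ ?_ ?_
    · exact continuous_const.mul
        ((continuous_const.mul (((continuous_W2.mul continuous_const).mul
          continuous_W2'))).mul continuous_const)
    · intro t
      refine mul_mem (Dm_unitary hxu (one_mem _)) (mul_mem (mul_mem E_unitary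
        (mul_mem (mul_mem (W2_mem hdd t) (Dm_unitary hxs (one_mem _))) (W2'_mem hdd t)))
        (Unitary.star_mem E_unitary))
    · beta_reduce
      rw [W2_zero, W2'_zero, one_mul, mul_one, E_conj, Dm_mul,
        mul_one, one_mul]
    · beta_reduce
      rw [W2_one hdd, show W2' d 1 = star (W2 d 1) from (star_W2 1).symm, W2_one hdd,
        Wm_conj hdd, ← hθdef, E_conj, Dm_mul, mul_one, one_mul]
  have j3 : Joined U3 U2 := by
    refine joined_of_fun (f := fun t => Dm x 1 * rot t * Dm θ 1 * strot t) ?_ ?_ ?_ ?_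
    · exact ((continuous_const.fun_mul continuous_rot).fun_mul continuous_const).fun_mul continuous_strot
    · intro t
      refine mul_mem (mul_mem (mul_mem ?_ (rot_unitary t)) ?_) ?_
      · exact Dm_unitary hxu (one_mem _)
      · exact Dm_unitary hθu (one_mem _)
      · rw [← star_rot]; exact Unitary.star_mem (rot_unitary t)
    · beta_reduce
      rw [rot_zero, strot_zero, mul_one, mul_one, Dm_mul, mul_one]
    · beta_reduce
      rw [rot_one, strot_one, show (-E : M B) = star E by rw [star_E],
        mul_assoc (Dm x 1), mul_assoc (Dm x 1), E_conj, Dm_mul,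
        mul_one, one_mul]
  refine ⟨1, U3, ?_, (j1.trans j2).trans j3.symm⟩
  rw [diag_eq_Dm]

end Part3

section Part4




open Complex

variable {A B : Type*} [CStarAlgebra A] [CStarAlgebra B]

/-- In a unital C*-algebra, `1 + k²` is invertible for selfadjoint `k`. -/
lemma isUnit_one_add_sq {k : A} (hk : IsSelfAdjoint k) : IsUnit (1 + k * k) := by
  have hmem : ∀ z : ℂ, z.im ≠ 0 → IsUnit (algebraMap ℂ A z - k) := by
    intro z hz
    by_contra h
    have hsp : z ∈ spectrum ℂ k := spectrum.mem_iff.mpr h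
    exact hz (hk.im_eq_zero_of_mem_spectrum hsp)
  have h1 : IsUnit (algebraMap ℂ A I - k) := hmem I (by simp)
  have h2 : IsUnit (algebraMap ℂ A (-I) - k) := hmem (-I) (by simp)
  have key : (algebraMap ℂ A I - k) * (algebraMap ℂ A (-I) - k) = 1 + k * k := by
    set a := algebraMap ℂ A I with ha
    have ha2 : a * a = -1 := by
      rw [ha, ← map_mul, I_mul_I, map_neg, map_one]
    have hak : a * k = k * a := Algebra.commutes I k
    have hmapneg : algebraMap ℂ A (-I) = -a := by rw [map_neg, ha]
    rw [hmapneg]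
    calc (a - k) * (-a - k) = -(a * a) - a * k + k * a + k * k := by noncomm_ring
      _ = -(a * a) + k * k := by rw [hak]; abel
      _ = 1 + k * k := by rw [ha2, neg_neg]
  rw [← key]
  exact h1.mul h2

/-- lift a unitary close to 1 along a surjective star algebra morphism, via the
Cayley transform. -/
lemma small_unitary_lift (π : A →⋆ₐ[ℂ] B) (hπ : Function.Surjective π)
    {w : B} (hw : w ∈ unitary B) (hsmall : ‖w - 1‖ < 1) :
    ∃ v : A, v ∈ unitary A ∧ π v = w := by
  have hw1 : star w * w = 1 := Unitary.star_mul_self_of_mem hw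
  -- 1 + w is invertible
  have hu : IsUnit (1 + w) := by
    have hnorm : ‖(2⁻¹ : ℂ) • (1 - w)‖ < 1 := by
      rw [norm_smul]
      have h2 : ‖(2⁻¹ : ℂ)‖ = 2⁻¹ := by norm_num
      rw [h2, norm_sub_rev]
      nlinarith [norm_nonneg (w - 1)]
    have hu2 : IsUnit ((1 : B) - (2⁻¹ : ℂ) • (1 - w)) := (Units.oneSub _ hnorm).isUnit
    have heq : (1 + w) = (2 : ℂ) • ((1 : B) - (2⁻¹ : ℂ) • (1 - w)) := by
      rw [smul_sub, smul_smul, show (2 : ℂ) * 2⁻¹ = 1 by norm_num, one_smul, two_smul]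
      abel
    obtain ⟨U2, hU2⟩ := hu2
    refine isUnit_iff_exists.mpr ⟨(2⁻¹ : ℂ) • (↑U2⁻¹ : B), ?_, ?_⟩
    · rw [heq, ← hU2, smul_mul_smul_comm, Units.mul_inv]
      norm_num
    · rw [heq, ← hU2, smul_mul_smul_comm, Units.inv_mul]
      norm_num
  set iu : B := ↑hu.unit⁻¹ with hiudef
  have hiu1 : (1 + w) * iu = 1 := hu.mul_val_inv
  have hiu2 : iu * (1 + w) = 1 := hu.val_inv_mul
  set k : B := I • ((1 - w) * iu) with hk
  -- selfadjointness of the Cayley transform k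
  have hstar1w : star ((1 : B) + w) = 1 + star w := by rw [star_add, star_one]
  have hsiu1 : (1 + star w) * star iu = 1 := by
    rw [← hstar1w, ← star_mul, hiu2, star_one]
  have hsiu2 : star iu * (1 + star w) = 1 := by
    rw [← hstar1w, ← star_mul, hiu1, star_one]
  have hcancel : ∀ x y : B, (1 + star w) * x * ((1 : B) + w) = (1 + star w) * y * (1 + w) →
      x = y := by
    intro x y hxy
    have e : ∀ z : B, star iu * ((1 + star w) * z * (1 + w)) * iu = z := by
      intro z
      calc star iu * ((1 + star w) * z * (1 + w)) * iu
          = (star iu * (1 + star w)) * z * ((1 + w) * iu) := by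
            simp only [mul_assoc]
        _ = z := by rw [hsiu2, hiu1, one_mul, mul_one]
    rw [← e x, ← e y, hxy]
  have hkstar : star k = k := by
    apply hcancel
    have hsk : star k = (-I) • (star iu * (1 - star w)) := by
      rw [hk, star_smul, star_mul, star_sub, star_one, Complex.star_def, conj_I]
    rw [hsk, hk]
    calc (1 + star w) * ((-I) • (star iu * (1 - star w))) * (1 + w)
        = (-I) • (((1 + star w) * star iu) * ((1 - star w) * (1 + w))) := by
          rw [mul_smul_comm, smul_mul_assoc]
          simp only [mul_assoc]
      _ = (-I) • ((1 - star w) * (1 + w)) := by rw [hsiu1, one_mul]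
      _ = (-I) • (w - star w) := by
          have : ((1 : B) - star w) * (1 + w) = w - star w := by
            simp only [sub_mul, mul_add, add_mul, one_mul, mul_one]
            rw [hw1]
            abel
          rw [this]
      _ = I • (star w - w) := by rw [neg_smul, ← smul_neg, neg_sub]
      _ = (1 + star w) * (I • ((1 - w) * iu)) * (1 + w) := by
          rw [mul_smul_comm, smul_mul_assoc]
          congr 1
          symm
          calc (1 + star w) * ((1 - w) * iu) * (1 + w)
              = ((1 + star w) * (1 - w)) * (iu * (1 + w)) := by simp only [mul_assoc]
            _ = (1 + star w) * (1 - w) := by rw [hiu2, mul_one]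
            _ = star w - w := by
                simp only [sub_mul, mul_sub, add_mul, mul_add, one_mul, mul_one]
                rw [hw1]
                abel
  -- lift k to a selfadjoint element
  obtain ⟨b, hb⟩ := hπ k
  set kt : A := (2⁻¹ : ℂ) • (b + star b) with hkt
  have hconj_half : (starRingEnd ℂ) (2⁻¹ : ℂ) = 2⁻¹ := by
    rw [show (2⁻¹ : ℂ) = ((2⁻¹ : ℝ) : ℂ) by norm_num, Complex.conj_ofReal]
  have hkt_sa : IsSelfAdjoint kt := by
    rw [IsSelfAdjoint, hkt, star_smul, star_add, star_star, Complex.star_def, hconj_half,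
      add_comm]
  have hπkt : π kt = k := by
    rw [hkt, map_smul, map_add, map_star, hb, ← hkstar, star_star, hkstar]
    rw [show k + k = (2 : ℂ) • k by rw [two_smul], smul_smul]
    norm_num
  -- the Cayley back-transform
  have hV : IsUnit ((1 : A) + kt * kt) := isUnit_one_add_sq hkt_sa
  set ka : A := 1 + I • kt with hka
  set kb : A := 1 - I • kt with hkb
  have hab : ka * kb = 1 + kt * kt := by
    simp only [hka, hkb, mul_sub, sub_mul, mul_add, add_mul, one_mul, mul_one,
      smul_mul_smul_comm, I_mul_I, neg_one_smul]
    abel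
  have hba : kb * ka = 1 + kt * kt := by
    simp only [hka, hkb, mul_sub, sub_mul, mul_add, add_mul, one_mul, mul_one,
      smul_mul_smul_comm, I_mul_I, neg_one_smul]
    abel
  set X : A := 1 + kt * kt with hX
  have hV1 : X * ↑hV.unit⁻¹ = 1 := hV.mul_val_inv
  have hV2 : (↑hV.unit⁻¹ : A) * X = 1 := hV.val_inv_mul
  set vinv : A := ↑hV.unit⁻¹ with hvinv
  have hsand : ∀ x : A, x * X = X * x → x * vinv = vinv * x := by
    intro x hx
    calc x * vinv = vinv * X * x * vinv := by rw [hV2, one_mul]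
      _ = vinv * (X * x) * vinv := by simp only [mul_assoc]
      _ = vinv * (x * X) * vinv := by rw [← hx]
      _ = vinv * x * (X * vinv) := by simp only [mul_assoc]
      _ = vinv * x := by rw [hV1, mul_one]
  have hcomka : ka * X = X * ka := by
    rw [hka, hX]
    simp only [add_mul, mul_add, one_mul, mul_one, smul_mul_assoc, mul_smul_comm, smul_add]
    rw [show kt * (kt * kt) = kt * kt * kt by rw [mul_assoc]]
    abel
  have hcomkb : kb * X = X * kb := by
    rw [hkb, hX]
    simp only [sub_mul, mul_sub, add_mul, mul_add, one_mul, mul_one, smul_mul_assoc,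
      mul_smul_comm, smul_add, smul_sub]
    rw [show kt * (kt * kt) = kt * kt * kt by rw [mul_assoc]]
    abel
  have hstar_ka : star ka = kb := by
    rw [hka, hkb, star_add, star_one, star_smul, Complex.star_def, conj_I, hkt_sa.star_eq,
      neg_smul, sub_eq_add_neg]
  have hstarX : star X = X := by
    rw [hX, star_add, star_one, star_mul, hkt_sa.star_eq]
  have hstar_vinv : star vinv = vinv := by
    have h1 : star vinv * X = 1 := by rw [← hstarX, ← star_mul, hV1, star_one]
    calc star vinv = star vinv * (X * vinv) := by rw [hV1, mul_one]
      _ = (star vinv * X) * vinv := by rw [mul_assoc]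
      _ = vinv := by rw [h1, one_mul]
  refine ⟨ka * ka * vinv, Unitary.mem_iff.mpr ⟨?_, ?_⟩, ?_⟩
  · have hstar_v : star (ka * ka * vinv) = vinv * (kb * kb) := by
      rw [star_mul, star_mul, hstar_vinv, hstar_ka]
    rw [hstar_v]
    have hmid : kb * kb * (ka * ka) = X * X := by
      calc kb * kb * (ka * ka) = kb * ((kb * ka) * ka) := by simp only [mul_assoc]
        _ = kb * (X * ka) := by rw [hba, hX]
        _ = kb * (ka * X) := by rw [hcomka]
        _ = (kb * ka) * X := by simp only [mul_assoc]
        _ = X * X := by rw [hba, hX]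
    calc vinv * (kb * kb) * (ka * ka * vinv)
        = vinv * ((kb * kb * (ka * ka)) * vinv) := by simp only [mul_assoc]
      _ = vinv * ((X * X) * vinv) := by rw [hmid]
      _ = vinv * (X * (X * vinv)) := by simp only [mul_assoc]
      _ = 1 := by rw [hV1, mul_one, hV2]
  · have hstar_v : star (ka * ka * vinv) = vinv * (kb * kb) := by
      rw [star_mul, star_mul, hstar_vinv, hstar_ka]
    rw [hstar_v]
    have hswapb : vinv * (kb * kb) = kb * kb * vinv := by
      rw [← hsand (kb * kb)]
      calc kb * kb * X = kb * (kb * X) := by rw [mul_assoc]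
        _ = kb * (X * kb) := by rw [hcomkb]
        _ = (kb * X) * kb := by rw [mul_assoc]
        _ = X * (kb * kb) := by rw [hcomkb, mul_assoc]
    rw [hswapb]
    have hc : ka * kb * kb * X = X * (ka * kb * kb) := by
      calc ka * kb * kb * X = ka * kb * (kb * X) := by simp only [mul_assoc]
        _ = ka * kb * (X * kb) := by rw [hcomkb]
        _ = ka * (kb * X) * kb := by simp only [mul_assoc]
        _ = ka * (X * kb) * kb := by rw [hcomkb]
        _ = (ka * X) * (kb * kb) := by simp only [mul_assoc]
        _ = X * (ka * (kb * kb)) := by rw [hcomka]; simp only [mul_assoc]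
        _ = X * (ka * kb * kb) := by simp only [mul_assoc]
    calc ka * ka * vinv * (kb * kb * vinv)
        = ka * ((ka * vinv) * (kb * kb)) * vinv := by simp only [mul_assoc]
      _ = ka * ((vinv * ka) * (kb * kb)) * vinv := by rw [hsand ka hcomka]
      _ = ka * (vinv * (ka * kb * kb)) * vinv := by simp only [mul_assoc]
      _ = ka * ((ka * kb * kb) * vinv) * vinv := by rw [← hsand (ka * kb * kb) hc]
      _ = ka * (X * kb * vinv) * vinv := by rw [hab, hX]
      _ = ka * (kb * X * vinv) * vinv := by rw [hcomkb]
      _ = (ka * kb) * X * vinv * vinv := by simp only [mul_assoc]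
      _ = X * X * vinv * vinv := by rw [hab, hX]
      _ = X * (X * vinv) * vinv := by simp only [mul_assoc]
      _ = 1 := by rw [hV1, mul_one, hV1]
  · -- the image is w
    have hπka : π ka = 1 + I • k := by rw [hka, map_add, map_one, map_smul, hπkt]
    have hπkb : π kb = 1 - I • k := by rw [hkb, map_sub, map_one, map_smul, hπkt]
    have hπX : π X = 1 + k * k := by rw [hX, map_add, map_one, map_mul, hπkt]
    have hπvinv1 : π vinv * ((1 : B) + k * k) = 1 := by
      rw [← hπX, ← map_mul, hV2, map_one]
    have hiku : I • k = -((1 - w) * iu) := by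
      rw [hk, smul_smul, I_mul_I, neg_one_smul]
    have hka1w : ((1 : B) + I • k) * (1 + w) = (2 : ℂ) • w := by
      rw [hiku, add_mul, one_mul, neg_mul, mul_assoc, hiu2, mul_one, two_smul]
      abel
    have hkb1w : ((1 : B) - I • k) * (1 + w) = (2 : ℂ) • (1 : B) := by
      rw [hiku, sub_neg_eq_add, add_mul, one_mul, mul_assoc, hiu2, mul_one, two_smul]
      abel
    have hwkb : w * ((1 : B) - I • k) = 1 + I • k := by
      have h1 : (w * ((1 : B) - I • k)) * (1 + w) = ((1 : B) + I • k) * (1 + w) := by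
        rw [mul_assoc, hkb1w, hka1w, mul_smul_comm, mul_one]
      calc w * ((1:B) - I • k) = (w * ((1:B) - I • k)) * ((1 + w) * iu) := by
            rw [hiu1, mul_one]
        _ = ((w * ((1:B) - I • k)) * (1 + w)) * iu := (mul_assoc _ _ _).symm
        _ = (((1:B) + I • k) * (1 + w)) * iu := by rw [h1]
        _ = ((1:B) + I • k) * ((1 + w) * iu) := mul_assoc _ _ _
        _ = (1:B) + I • k := by rw [hiu1, mul_one]
    have hkbka : ((1:B) - I • k) * (1 + I • k) = 1 + k * k := by
      simp only [mul_sub, sub_mul, mul_add, add_mul, one_mul, mul_one,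
        smul_mul_smul_comm, I_mul_I, neg_one_smul]
      abel
    have hVB : IsUnit ((1 : B) + k * k) := by
      have := hV.map π
      rwa [hπX] at this
    obtain ⟨VBu, hVBu⟩ := hVB
    have hstep : π (ka * ka * vinv) * ((1 : B) + k * k) = w * ((1 : B) + k * k) := by
      rw [map_mul, map_mul, hπka]
      calc (1 + I • k) * (1 + I • k) * π vinv * (1 + k * k)
          = (1 + I • k) * (1 + I • k) * (π vinv * (1 + k * k)) := by simp only [mul_assoc]
        _ = (1 + I • k) * (1 + I • k) := by rw [hπvinv1, mul_one]
        _ = w * (((1:B) - I • k) * (1 + I • k)) := by rw [← mul_assoc, hwkb]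
        _ = w * ((1:B) + k * k) := by rw [hkbka]
    rw [← hVBu] at hstep
    exact (Units.mul_left_inj VBu).mp hstep

/-- a unitary joined to 1 lifts along a surjective morphism of unital C*-algebras -/
lemma unitary_lift_of_joined (π : A →⋆ₐ[ℂ] B) (hπ : Function.Surjective π)
    {z : unitary B} (hz : Joined (1 : unitary B) z) :
    ∃ v : A, v ∈ unitary A ∧ π v = z := by
  obtain ⟨γ⟩ := hz
  set g : unitInterval → B := fun t => ((γ t : unitary B) : B) with hg
  have hmemg : ∀ t, g t ∈ unitary B := fun t => (γ t).prop
  have hgc : Continuous g := continuous_subtype_val.comp γ.continuous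
  have hgu : UniformContinuous g := CompactSpace.uniformContinuous_of_continuous hgc
  rw [Metric.uniformContinuous_iff] at hgu
  obtain ⟨δ, hδ0, hδ⟩ := hgu (1/2) (by norm_num)
  obtain ⟨m, hm⟩ := exists_nat_one_div_lt hδ0
  set p : ℕ → unitInterval := fun j => Set.projIcc 0 1 zero_le_one ((j : ℝ) / (m + 1)) with hp
  have hmemIcc : ∀ j : ℕ, j ≤ m + 1 → ((j : ℝ) / (m + 1)) ∈ Set.Icc (0 : ℝ) 1 := by
    intro j hj
    constructor
    · positivity
    · rw [div_le_one (by positivity)]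
      exact_mod_cast hj
  have hp0 : p 0 = 0 := by
    rw [hp]
    simp only [Nat.cast_zero, zero_div]
    rw [Set.projIcc_left]
    rfl
  have hpm : p (m + 1) = 1 := by
    rw [hp]
    have : ((m + 1 : ℕ) : ℝ) / (m + 1) = 1 := by
      rw [div_eq_one_iff_eq (by positivity)]
      push_cast
      ring
    simp only [this]
    rw [Set.projIcc_right]
    rfl
  have hdist : ∀ j : ℕ, j + 1 ≤ m + 1 → dist (g (p (j + 1))) (g (p j)) < 1 / 2 := by
    intro j hj
    apply hδ
    have h1 := hmemIcc j (by omega)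
    have h2 := hmemIcc (j + 1) hj
    have e1 : p j = ⟨(j : ℝ) / (m + 1), h1⟩ := by rw [hp]; exact Set.projIcc_of_mem _ h1
    have e2 : p (j + 1) = ⟨((j + 1 : ℕ) : ℝ) / (m + 1), h2⟩ := by
      rw [hp]; exact Set.projIcc_of_mem _ h2
    rw [e1, e2, Subtype.dist_eq]
    simp only
    rw [Real.dist_eq]
    have : ((j + 1 : ℕ) : ℝ) / (m + 1) - (j : ℝ) / (m + 1) = 1 / (m + 1) := by
      rw [div_sub_div_same]
      push_cast
      ring_nf
    rw [this, abs_of_pos (by positivity)]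
    exact hm
  have main : ∀ j : ℕ, j ≤ m + 1 → ∃ v : A, v ∈ unitary A ∧ π v = g (p j) := by
    intro j
    induction j with
    | zero =>
      intro _
      refine ⟨1, one_mem _, ?_⟩
      rw [map_one, hp0]
      show (1 : B) = ((γ 0 : unitary B) : B)
      rw [γ.source]
      rfl
    | succ n ih =>
      intro hn
      obtain ⟨v, hv, hπv⟩ := ih (by omega)
      set x : B := g (p (n + 1)) - g (p n) with hx
      set wst : B := g (p (n + 1)) * star (g (p n)) with hwst
      have hwmem : wst ∈ unitary B := mul_mem (hmemg _) (Unitary.star_mem (hmemg _))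
      have hsmall : ‖wst - 1‖ < 1 := by
        have heq : wst - 1 = x * star (g (p n)) := by
          rw [hwst, hx, sub_mul, Unitary.mul_star_self_of_mem (hmemg (p n))]
        have hprod : (x * star (g (p n))) * star (x * star (g (p n))) = x * star x := by
          rw [star_mul, star_star, mul_assoc, ← mul_assoc (star (g (p n))),
            Unitary.star_mul_self_of_mem (hmemg (p n)), one_mul]
        have hnorm : ‖x * star (g (p n))‖ = ‖x‖ := by
          have h1 : ‖x * star (g (p n))‖ * ‖x * star (g (p n))‖ = ‖x‖ * ‖x‖ := by
            rw [← CStarRing.norm_self_mul_star, hprod, CStarRing.norm_self_mul_star]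
          exact (mul_self_inj (norm_nonneg _) (norm_nonneg _)).mp h1
        rw [heq, hnorm]
        have hd := hdist n hn
        rw [dist_eq_norm] at hd
        rw [hx]
        linarith
      obtain ⟨vw, hvw, hπvw⟩ := small_unitary_lift π hπ hwmem hsmall
      refine ⟨vw * v, mul_mem hvw hv, ?_⟩
      rw [map_mul, hπvw, hπv, hwst, mul_assoc,
        Unitary.star_mul_self_of_mem (hmemg (p n)), mul_one]
  obtain ⟨v, hv, hπv⟩ := main (m + 1) le_rfl
  refine ⟨v, hv, ?_⟩
  rw [hπv, hpm]
  show ((γ 1 : unitary B) : B) = z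
  rw [γ.target]

end Part4

section Part5
variable {R : Type*} [Ring R] [StarRing R]

/-- cancellation of a common isometric left factor -/
lemma cancel_isom {a : R} (ha : star a * a = 1) (b d : R) :
    star (a * b) * (a * d) = star b * d := by
  rw [star_mul, mul_assoc, ← mul_assoc (star a), ha, one_mul]

/-- orthogonality of ranges from orthogonality of the isometries -/
lemma range_orth {a b : R} (h : star a * b = 0) :
    (a * star a) * (b * star b) = 0 := by
  rw [mul_assoc, ← mul_assoc (star a), h, zero_mul, mul_zero]

/-- two isometries with orthogonal range projections annihilate -/
lemma orth_of_range_orth {v w : R} (hv : star v * v = 1) (hw : star w * w = 1)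
    (h : (v * star v) * (w * star w) = 0) : star v * w = 0 := by
  have e1 : star v * (v * star v) = star v := by rw [← mul_assoc, hv, one_mul]
  have e2 : (w * star w) * w = w := by rw [mul_assoc, hw, mul_one]
  calc star v * w = (star v * (v * star v)) * ((w * star w) * w) := by rw [e1, e2]
    _ = star v * ((v * star v) * (w * star w)) * w := by simp only [mul_assoc]
    _ = 0 := by rw [h, mul_zero, zero_mul]

end Part5

end Stmt7Proof

/-- a pull-back of two unital properly infinite C*-algebras over a
`K₁`-injective quotient is properly infinite. -/
theorem stmt7 {A A₁ A₂ B : Type*}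
    [CStarAlgebra A] [CStarAlgebra A₁] [CStarAlgebra A₂] [CStarAlgebra B]
    (φ₁ : A →⋆ₐ[ℂ] A₁) (φ₂ : A →⋆ₐ[ℂ] A₂) (π₁ : A₁ →⋆ₐ[ℂ] B) (π₂ : A₂ →⋆ₐ[ℂ] B)
    (hπ₁ : Function.Surjective π₁) (hπ₂ : Function.Surjective π₂)
    (hcomp : ∀ a : A, π₁ (φ₁ a) = π₂ (φ₂ a))
    (hpb : ∀ a₁ a₂, π₁ a₁ = π₂ a₂ → ∃! a : A, φ₁ a = a₁ ∧ φ₂ a = a₂)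
    (h₁ : IsProperlyInfinite (1 : A₁)) (h₂ : IsProperlyInfinite (1 : A₂))
    (hB : K1Injective B) :
    IsProperlyInfinite (1 : A) := by
  classical
  open Stmt7Proof in
  obtain ⟨s1, s2, hs1, hs2, -, -, hsorth⟩ := h₁
  obtain ⟨t1, t2, ht1, ht2, -, -, htorth⟩ := h₂
  -- orthogonality of the isometries
  have hs12 : star s1 * s2 = 0 := orth_of_range_orth hs1 hs2 hsorth
  have hs21 : star s2 * s1 = 0 := by
    refine orth_of_range_orth hs2 hs1 ?_
    have := congrArg star hsorth
    rwa [star_mul, star_mul, star_mul, star_star, star_star, star_zero] at this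
  have ht12 : star t1 * t2 = 0 := orth_of_range_orth ht1 ht2 htorth
  have ht21 : star t2 * t1 = 0 := by
    refine orth_of_range_orth ht2 ht1 ?_
    have := congrArg star htorth
    rwa [star_mul, star_mul, star_mul, star_star, star_star, star_zero] at this
  -- elements of B
  have mrel₁ : ∀ x y r : A₁, star x * y = r → star (π₁ x) * (π₁ y) = π₁ r := by
    intro x y r h
    rw [← map_star, ← map_mul, h]
  have mrel₂ : ∀ x y r : A₂, star x * y = r → star (π₂ x) * (π₂ y) = π₂ r := by
    intro x y r h
    rw [← map_star, ← map_mul, h]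
  -- the intertwining unitary u₀ in B
  obtain ⟨u0, hu01, hu02, hu0t1, hu0t2⟩ :=
    exists_intertwiner (π₁ (s1 * s1)) (π₁ (s1 * s2)) (π₁ s2)
      (π₂ (t1 * t1)) (π₂ (t1 * t2)) (π₂ t2)
      (by rw [mrel₁ _ _ 1 (by rw [cancel_isom hs1, hs1]), map_one])
      (by rw [mrel₁ _ _ 1 (by rw [cancel_isom hs1, hs2]), map_one])
      (by rw [mrel₁ _ _ 1 hs2, map_one])
      (by rw [mrel₁ _ _ 0 (by rw [cancel_isom hs1, hs12]), map_zero])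
      (by rw [mrel₁ _ _ 0 (by rw [cancel_isom hs1, hs21]), map_zero])
      (by rw [mrel₁ _ _ 0 (by rw [← mul_assoc, hs21, zero_mul]), map_zero])
      (by rw [mrel₁ _ _ 0 (by rw [← mul_assoc, hs21, zero_mul]), map_zero])
      (by rw [mrel₁ _ _ 0 (by rw [star_mul, mul_assoc, hs12, mul_zero]), map_zero])
      (by rw [mrel₁ _ _ 0 (by rw [star_mul, mul_assoc, hs12, mul_zero]), map_zero])
      (by rw [mrel₂ _ _ 1 (by rw [cancel_isom ht1, ht1]), map_one])
      (by rw [mrel₂ _ _ 1 (by rw [cancel_isom ht1, ht2]), map_one])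
      (by rw [mrel₂ _ _ 1 ht2, map_one])
      (by rw [mrel₂ _ _ 0 (by rw [cancel_isom ht1, ht12]), map_zero])
      (by rw [mrel₂ _ _ 0 (by rw [cancel_isom ht1, ht21]), map_zero])
      (by rw [mrel₂ _ _ 0 (by rw [← mul_assoc, ht21, zero_mul]), map_zero])
      (by rw [mrel₂ _ _ 0 (by rw [← mul_assoc, ht21, zero_mul]), map_zero])
      (by rw [mrel₂ _ _ 0 (by rw [star_mul, mul_assoc, ht12, mul_zero]), map_zero])
      (by rw [mrel₂ _ _ 0 (by rw [star_mul, mul_assoc, ht12, mul_zero]), map_zero])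
  set d : B := π₂ t2 with hd
  have hdd : star d * d = 1 := by rw [hd, mrel₂ _ _ 1 ht2, map_one]
  have hd1 : star d * π₂ (t1 * t1) = 0 := by
    rw [hd, mrel₂ _ _ 0 (by rw [← mul_assoc, ht21, zero_mul]), map_zero]
  have hd2 : star d * π₂ (t1 * t2) = 0 := by
    rw [hd, mrel₂ _ _ 0 (by rw [← mul_assoc, ht21, zero_mul]), map_zero]
  obtain ⟨hθ1, hθ2, hθt1, hθt2⟩ :=
    theta_props u0 d (π₂ (t1 * t1)) (π₂ (t1 * t2)) hu01 hu02 hdd hd1 hd2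
  set θ : B := d * star u0 * star d + 1 - d * star d with hθdef
  set u : B := u0 * θ with hu
  have humem : u ∈ unitary B := by
    rw [hu]
    exact mul_mem (Unitary.mem_iff.mpr ⟨hu01, hu02⟩) (Unitary.mem_iff.mpr ⟨hθ1, hθ2⟩)
  have hut1 : u * π₂ (t1 * t1) = π₁ (s1 * s1) := by
    rw [hu, mul_assoc, hθt1, hu0t1]
  have hut2 : u * π₂ (t1 * t2) = π₁ (s1 * s2) := by
    rw [hu, mul_assoc, hθt2, hu0t2]
  -- K₁-triviality and the path to 1
  have hk1 : K1Trivial u := k1trivial_theta u0 d hu01 hu02 hdd hθ1 hθ2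
  have hjoined : Joined (1 : unitary B) ⟨u, humem⟩ := hB ⟨u, humem⟩ hk1
  obtain ⟨V, hVmem, hπV⟩ := unitary_lift_of_joined π₂ hπ₂ hjoined
  have hVV : star V * V = 1 := Unitary.star_mul_self_of_mem hVmem
  -- the lifted pair in A₂
  have hy1 : π₂ (V * (t1 * t1)) = π₁ (s1 * s1) := by
    rw [map_mul, hπV, hut1]
  have hy2 : π₂ (V * (t1 * t2)) = π₁ (s1 * s2) := by
    rw [map_mul, hπV, hut2]
  -- pull back
  obtain ⟨a1, ⟨ha11, ha12⟩, -⟩ := hpb (s1 * s1) (V * (t1 * t1)) hy1.symm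
  obtain ⟨a2, ⟨ha21, ha22⟩, -⟩ := hpb (s1 * s2) (V * (t1 * t2)) hy2.symm
  have key1 : ∀ q : A, φ₁ q = 1 → φ₂ q = 1 → q = 1 := by
    intro q hq1 hq2
    obtain ⟨e, -, huniq⟩ := hpb 1 1 (by rw [map_one, map_one])
    rw [huniq q ⟨hq1, hq2⟩, ← huniq 1 ⟨map_one _, map_one _⟩]
  have key0 : ∀ q : A, φ₁ q = 0 → φ₂ q = 0 → q = 0 := by
    intro q hq1 hq2
    obtain ⟨e, -, huniq⟩ := hpb 0 0 (by rw [map_zero, map_zero])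
    rw [huniq q ⟨hq1, hq2⟩, ← huniq 0 ⟨map_zero _, map_zero _⟩]
  refine ⟨a1, a2, ?_, ?_, one_mul _, one_mul _, ?_⟩
  · refine key1 _ ?_ ?_
    · rw [map_mul, map_star, ha11, cancel_isom hs1, hs1]
    · rw [map_mul, map_star, ha12, cancel_isom hVV, cancel_isom ht1, ht1]
  · refine key1 _ ?_ ?_
    · rw [map_mul, map_star, ha21, cancel_isom hs1, hs2]
    · rw [map_mul, map_star, ha22, cancel_isom hVV, cancel_isom ht1, ht2]
  · refine key0 _ ?_ ?_
    · rw [map_mul, map_mul, map_mul, map_star, map_star, ha11, ha21]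
      exact range_orth (by rw [cancel_isom hs1, hs12])
    · rw [map_mul, map_mul, map_mul, map_star, map_star, ha12, ha22]
      exact range_orth (by rw [cancel_isom hVV, cancel_isom ht1, ht12])
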